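/- Let q ∈ ℕ, d ∈ {1,2,4}, and for a partition λ = (λ₁ ≥ ⋯ ≥ λ_q ≥ 0) in ℕ^q define the generalized Pochhammer symbol (μ)_λ = ∏_{j=1}^q (μ - (d/2)(j-1))_{λ_j}, where (a)_n = a(a+1)⋯(a+n-1). Then for all μ > d(q - 1/2), one has μ^{|λ|}/(μ)_λ ≤ 2^{dq(q-1)/2}, where |λ| = λ₁ + ⋯ + λ_q. -/
import Mathlib


/-- The generalized Pochhammer symbol `(μ)_λ = ∏_{j=1}^q (μ - (d/2)(j-1))_{λ_j}`,
where `(a)_n` is the rising factorial. -/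
noncomputable def genPochhammer (d q : ℕ) (μ : ℝ) (lam : Fin q → ℕ) : ℝ :=
  ∏ j : Fin q, (ascPochhammer ℝ (lam j)).eval (μ - (d : ℝ) / 2 * (j : ℕ))

lemma ascPoch_eval_prod (n : ℕ) (a : ℝ) :
    (ascPochhammer ℝ n).eval a = ∏ k ∈ Finset.range n, (a + k) := by
  induction n with
  | zero => simp
  | succ n ih => rw [ascPochhammer_succ_eval, ih, Finset.prod_range_succ]

lemma prod_ite_two (n m : ℕ) :
    (∏ k ∈ Finset.range n, (if k < m then (2 : ℝ) else 1)) = 2 ^ min n m := by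
  induction n with
  | zero => simp
  | succ n ih =>
    rw [Finset.prod_range_succ, ih]
    by_cases h : n < m
    · rw [if_pos h]
      have : min (n + 1) m = min n m + 1 := by omega
      rw [this, pow_succ]
    · rw [if_neg h]
      have : min (n + 1) m = min n m := by omega
      rw [this, mul_one]

lemma key (a μ : ℝ) (n m : ℕ) (hμ : 0 < μ) (h1 : μ ≤ 2 * a)
    (h2 : ∀ k : ℕ, m ≤ k → μ ≤ a + k) :
    μ ^ n ≤ 2 ^ m * (ascPochhammer ℝ n).eval a := by
  have ha : 0 < a := by linarith
  have hstep : ∀ k ∈ Finset.range n, μ ≤ (if k < m then (2 : ℝ) else 1) * (a + k) := by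
    intro k _
    by_cases h : k < m
    · rw [if_pos h]
      have : (0 : ℝ) ≤ k := Nat.cast_nonneg k
      nlinarith
    · rw [if_neg h, one_mul]
      exact h2 k (Nat.le_of_not_lt h)
  calc μ ^ n = ∏ _k ∈ Finset.range n, μ := by rw [Finset.prod_const, Finset.card_range]
    _ ≤ ∏ k ∈ Finset.range n, (if k < m then (2 : ℝ) else 1) * (a + k) :=
        Finset.prod_le_prod (fun k _ => hμ.le) hstep
    _ = (∏ k ∈ Finset.range n, (if k < m then (2 : ℝ) else 1)) *
          ∏ k ∈ Finset.range n, (a + k) := Finset.prod_mul_distrib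
    _ ≤ 2 ^ m * (ascPochhammer ℝ n).eval a := by
        rw [prod_ite_two, ← ascPoch_eval_prod]
        have hpos : 0 < (ascPochhammer ℝ n).eval a := ascPochhammer_pos n a ha
        have : (2 : ℝ) ^ min n m ≤ 2 ^ m :=
          pow_le_pow_right₀ one_le_two (min_le_right n m)
        nlinarith

theorem stmt_6 (d q : ℕ) (hd : d ∈ ({1, 2, 4} : Set ℕ)) (lam : Fin q → ℕ)
    (hlam : Antitone lam) (μ : ℝ) (hμ : (d : ℝ) * ((q : ℝ) - 1 / 2) < μ) :
    μ ^ (∑ j, lam j) / genPochhammer d q μ lam ≤ 2 ^ (d * q * (q - 1) / 2) := by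
  rcases Nat.eq_zero_or_pos q with hq | hq
  · subst hq
    simp [genPochhammer]
  have hd1 : 1 ≤ d := by
    simp only [Set.mem_insert_iff, Set.mem_singleton_iff] at hd
    omega
  have hd1' : (1 : ℝ) ≤ d := by exact_mod_cast hd1
  have hq1 : (1 : ℝ) ≤ q := by exact_mod_cast hq
  have hμ0 : 0 < μ := by nlinarith
  -- per-factor bound
  have hfac : ∀ j : Fin q,
      μ ^ (lam j) ≤ 2 ^ (d * (j : ℕ)) *
        (ascPochhammer ℝ (lam j)).eval (μ - (d : ℝ) / 2 * (j : ℕ)) := by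
    intro j
    have hj : ((j : ℕ) : ℝ) ≤ (q : ℝ) - 1 := by
      have := j.2
      have : ((j : ℕ) : ℝ) ≤ (q : ℝ) - 1 := by
        have h1 : (j : ℕ) + 1 ≤ q := j.2
        have := Nat.cast_le (α := ℝ).2 h1
        push_cast at this
        linarith
      exact this
    have hdj : (d : ℝ) * (j : ℕ) < μ := by nlinarith
    apply key _ _ _ _ hμ0
    · -- μ ≤ 2 * (μ - d/2 * j)
      linarith
    · intro k hk
      have hk' : (d : ℝ) * (j : ℕ) ≤ (k : ℝ) := by
        calc (d : ℝ) * (j : ℕ) ≤ (d * (j : ℕ) : ℕ) := by push_cast; linarith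
          _ ≤ (k : ℝ) := Nat.cast_le.2 hk
      have : (d : ℝ) / 2 * (j : ℕ) ≤ (d : ℝ) * (j : ℕ) := by
        have : (0 : ℝ) ≤ ((j : ℕ) : ℝ) := Nat.cast_nonneg _
        nlinarith
      linarith
  have hPpos : 0 < genPochhammer d q μ lam := by
    apply Finset.prod_pos
    intro j _
    apply ascPochhammer_pos
    have hj : ((j : ℕ) : ℝ) ≤ (q : ℝ) - 1 := by
      have h1 : (j : ℕ) + 1 ≤ q := j.2
      have := Nat.cast_le (α := ℝ).2 h1
      push_cast at this
      linarith
    nlinarith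
  rw [div_le_iff₀ hPpos]
  have hsum : ∑ j : Fin q, d * (j : ℕ) = d * q * (q - 1) / 2 := by
    rw [← Finset.mul_sum, Fin.sum_univ_eq_sum_range (fun i => i) q, Finset.sum_range_id]
    have h2 : 2 ∣ q * (q - 1) := by
      rcases Nat.even_or_odd q with he | ho
      · exact Dvd.dvd.mul_right he.two_dvd _
      · exact Dvd.dvd.mul_left (Nat.Odd.sub_odd ho odd_one).two_dvd _
    rw [mul_assoc, Nat.mul_div_assoc d h2]
  calc μ ^ (∑ j, lam j) = ∏ j : Fin q, μ ^ (lam j) := by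
        rw [← Finset.prod_pow_eq_pow_sum]
    _ ≤ ∏ j : Fin q, (2 ^ (d * (j : ℕ)) *
          (ascPochhammer ℝ (lam j)).eval (μ - (d : ℝ) / 2 * (j : ℕ))) := by
        apply Finset.prod_le_prod (fun j _ => pow_nonneg hμ0.le _) (fun j _ => hfac j)
    _ = (∏ j : Fin q, (2 : ℝ) ^ (d * (j : ℕ))) * genPochhammer d q μ lam := by
        rw [genPochhammer, Finset.prod_mul_distrib]
    _ = 2 ^ (d * q * (q - 1) / 2) * genPochhammer d q μ lam := by
        rw [Finset.prod_pow_eq_pow_sum, hsum]
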